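/- The permutation ergodic averages on the Boolean algebra converge in norm to the conditional expectation E: for every compact operator k on H, every c ∈ ℂ and every ε > 0 there is a finite J₀ ⊆ ℤ such that for every finite J ⊆ ℤ with J₀ ⊆ J one has ‖(1/|J|!) Σ_{g ∈ P_J} U_g (k + c·1) U_g* − (⟨k e_#, e_#⟩·P_# + c·1)‖ < ε, where P_J is the group of permutations of ℤ fixing every element of ℤ∖J pointwise (so |P_J| = |J|!). -/

import Mathlib

noncomputable section

/-- The Hilbert space `ℓ²({#} ∪ ℤ)`, with `#` encoded as `none : Option ℤ`. -/
abbrev BooleanSpace : Type := lp (fun _ : Option ℤ => ℂ) 2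

/-- The canonical orthonormal basis vectors `e_x`, `x ∈ {#} ∪ ℤ`;
`e none` is the vacuum vector `e_#`. -/
def e (x : Option ℤ) : BooleanSpace := lp.single 2 x (1 : ℂ)

/-- The orthogonal projection `P_#` of `ℓ²({#} ∪ ℤ)` onto `ℂ e_#`. -/
def vacuumProjection : BooleanSpace →L[ℂ] BooleanSpace :=
  (innerSL ℂ (e none)).smulRight (e none)

/-- `V` is the unitary of `ℓ²({#} ∪ ℤ)` implementing the permutation `g` of `ℤ`
(fixing the vacuum). -/
def ImplementsPerm (g : Equiv.Perm ℤ) (V : BooleanSpace →L[ℂ] BooleanSpace) : Prop :=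
  V * ContinuousLinearMap.adjoint V = 1 ∧ ContinuousLinearMap.adjoint V * V = 1 ∧
    (∀ i : ℤ, V (e (some i)) = e (some (g i))) ∧ V (e none) = e none

/-- The permutation of `ℤ` obtained by extending a permutation of the finite set `J`
by the identity outside `J`; as `g` ranges over `Equiv.Perm J` these are exactly the
elements of the group `P_J` of permutations of `ℤ` fixing `ℤ ∖ J` pointwise
(a group of cardinality `|J|!`). -/
def extendPerm (J : Finset ℤ) (g : Equiv.Perm {x : ℤ // x ∈ J}) : Equiv.Perm ℤ :=
  g.extendDomain (Equiv.refl _)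

open scoped ENNReal ComplexConjugate

local notation "H" => BooleanSpace

lemma inner_e_apply (x : Option ℤ) (v : H) : (inner ℂ (e x) v : ℂ) = v x := by
  rw [e, lp.inner_single_left]; simp [RCLike.inner_apply]

lemma norm_e (x : Option ℤ) : ‖e x‖ = 1 := by
  have := lp.norm_single (p := 2) (E := fun _ : Option ℤ => ℂ) (by norm_num) x (1:ℂ)
  simpa [e] using this

/-- rank one operator `v ↦ ⟪e y, v⟫ • e x`. -/
def rk (x y : Option ℤ) : H →L[ℂ] H := (innerSL ℂ (e y)).smulRight (e x)

lemma rk_apply (x y : Option ℤ) (v : H) : rk x y v = (v y) • e x := by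
  simp [rk, inner_e_apply]

lemma vacuumProjection_eq : vacuumProjection = rk none none := rfl

lemma norm_rk_apply_le (x y : Option ℤ) (v : H) : ‖rk x y v‖ ≤ ‖v‖ := by
  rw [rk_apply, norm_smul, norm_e, mul_one]
  exact lp.norm_apply_le_norm (by norm_num) v y

lemma norm_rk_le (x y : Option ℤ) : ‖rk x y‖ ≤ 1 := by
  refine ContinuousLinearMap.opNorm_le_bound _ zero_le_one fun v => ?_
  simpa using norm_rk_apply_le x y v

def proj (F : Finset (Option ℤ)) : H →L[ℂ] H := ∑ x ∈ F, rk x x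

lemma proj_apply (F : Finset (Option ℤ)) (v : H) :
    proj F v = ∑ x ∈ F, lp.single 2 x (v x) := by
  rw [proj, ContinuousLinearMap.sum_apply]
  refine Finset.sum_congr rfl fun x _ => ?_
  rw [rk_apply, e, ← lp.single_smul]
  norm_num

lemma norm_sub_proj_le (F : Finset (Option ℤ)) (v : H) : ‖v - proj F v‖ ≤ ‖v‖ := by
  have h2 : (0:ℝ) < (2:ℝ≥0∞).toReal := by norm_num
  have := lp.norm_compl_sum_single h2 v F
  rw [proj_apply]
  have hn : ‖v - ∑ i ∈ F, lp.single 2 i (v i)‖ ^ (2:ℝ≥0∞).toReal ≤ ‖v‖ ^ (2:ℝ≥0∞).toReal := by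
    rw [this]
    have : (0:ℝ) ≤ ∑ i ∈ F, ‖v i‖ ^ (2:ℝ≥0∞).toReal :=
      Finset.sum_nonneg fun i _ => Real.rpow_nonneg (norm_nonneg _) _
    linarith
  by_contra hc
  push_neg at hc
  have : ‖v‖ ^ (2:ℝ≥0∞).toReal < ‖v - ∑ i ∈ F, lp.single 2 i (v i)‖ ^ (2:ℝ≥0∞).toReal :=
    Real.rpow_lt_rpow (norm_nonneg _) hc (by norm_num)
  linarith

lemma card_fiber_eq {α : Type*} [Fintype α] [DecidableEq α] (b i : α) :
    (Finset.univ.filter fun g : Equiv.Perm α => g b = i).card =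
      (Finset.univ.filter fun g : Equiv.Perm α => g b = b).card := by
  refine Finset.card_bij' (fun g _ => Equiv.swap i b * g) (fun g _ => Equiv.swap i b * g)
    ?_ ?_ ?_ ?_
  · intro g hg
    simp only [Finset.mem_filter, Finset.mem_univ, true_and] at hg ⊢
    simp [Equiv.Perm.mul_apply, hg]
  · intro g hg
    simp only [Finset.mem_filter, Finset.mem_univ, true_and] at hg ⊢
    simp [Equiv.Perm.mul_apply, hg]
  · intro g _
    show Equiv.swap i b * (Equiv.swap i b * g) = g
    rw [← mul_assoc, Equiv.swap_mul_self, one_mul]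
  · intro g _
    show Equiv.swap i b * (Equiv.swap i b * g) = g
    rw [← mul_assoc, Equiv.swap_mul_self, one_mul]

lemma sum_perm_comp_apply {α : Type*} [Fintype α] [DecidableEq α] {M : Type*} [AddCommMonoid M]
    (b : α) (f : α → M) :
    ∑ g : Equiv.Perm α, f (g b) =
      ((Finset.univ.filter fun g : Equiv.Perm α => g b = b).card) • ∑ i : α, f i := by
  rw [← Finset.sum_fiberwise_of_maps_to (g := fun g : Equiv.Perm α => g b)
    (fun g _ => Finset.mem_univ (g b)) (fun g => f (g b))]
  rw [Finset.smul_sum]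
  refine Finset.sum_congr rfl fun i _ => ?_
  have : ∀ g ∈ Finset.univ.filter fun g : Equiv.Perm α => g b = i, f (g b) = f i := by
    intro g hg
    simp only [Finset.mem_filter] at hg
    rw [hg.2]
  rw [Finset.sum_congr rfl this, Finset.sum_const, card_fiber_eq b i]

lemma card_fiber_mul {α : Type*} [Fintype α] [DecidableEq α] (b : α) :
    ((Finset.univ.filter fun g : Equiv.Perm α => g b = b).card) * Fintype.card α =
      Fintype.card (Equiv.Perm α) := by
  have h := sum_perm_comp_apply b (fun _ : α => (1 : ℕ))
  simp only [Finset.sum_const, smul_eq_mul, mul_one, Finset.card_univ] at h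
  rw [← h]

/-- tail lemma -/
lemma exists_tail (v : H) {δ : ℝ} (hδ : 0 < δ) :
    ∃ F : Finset (Option ℤ), ∀ F' : Finset (Option ℤ), F ⊆ F' → ‖v - proj F' v‖ < δ := by
  have h := lp.hasSum_single (p := (2:ℝ≥0∞)) ENNReal.ofNat_ne_top v
  rw [HasSum, Metric.tendsto_nhds] at h
  have := h δ hδ
  replace this := Filter.eventually_atTop.mp this
  obtain ⟨F, hF⟩ := this
  exact ⟨F, fun F' hF' => by
    have := hF F' hF'
    rw [dist_eq_norm] at this
    rw [proj_apply, ← norm_neg]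
    simpa [neg_sub] using this⟩

/-- self-adjointness of proj -/
lemma inner_proj_symm (F : Finset (Option ℤ)) (v w : H) :
    (inner ℂ w (proj F v) : ℂ) = inner ℂ (proj F w) v := by
  rw [proj_apply, proj_apply, inner_sum, sum_inner]
  refine Finset.sum_congr rfl fun x _ => ?_
  rw [lp.inner_single_right, lp.inner_single_left]

lemma exists_proj_comp (k : H →L[ℂ] H) (hk : IsCompactOperator ⇑k) {δ : ℝ} (hδ : 0 < δ) :
    ∃ F : Finset (Option ℤ), ‖k - proj F ∘L k‖ ≤ δ := by
  have hcomp : IsCompact (closure (⇑k '' Metric.closedBall 0 1)) :=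
    hk.isCompact_closure_image_closedBall 1
  have htb : TotallyBounded (⇑k '' Metric.closedBall 0 1) :=
    (hcomp.totallyBounded).subset subset_closure
  obtain ⟨t, htfin, hcov⟩ := (Metric.totallyBounded_iff).mp htb (δ/2) (by linarith)
  choose! Fsel hFsel using fun y : H => exists_tail y (half_pos hδ)
  set F : Finset (Option ℤ) := htfin.toFinset.sup Fsel with hF
  refine ⟨F, ?_⟩
  have key : ∀ v : H, ‖v‖ ≤ 1 → ‖k v - proj F (k v)‖ ≤ δ := by
    intro v hv
    have hmem : k v ∈ ⇑k '' Metric.closedBall 0 1 :=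
      ⟨v, by simpa [Metric.mem_closedBall, dist_eq_norm] using hv, rfl⟩
    obtain ⟨y, hyt, hy⟩ := Set.mem_iUnion₂.mp (hcov hmem)
    have hyF : Fsel y ⊆ F := hF ▸ Finset.le_sup (htfin.mem_toFinset.mpr hyt)
    have h1 : ‖y - proj F y‖ < δ/2 := hFsel y F hyF
    have h2 : ‖(k v - y) - proj F (k v - y)‖ ≤ ‖k v - y‖ := norm_sub_proj_le F _
    have h3 : ‖k v - y‖ < δ/2 := by
      rw [← dist_eq_norm]; exact Metric.mem_ball.mp hy
    have hsplit : k v - proj F (k v) =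
        ((k v - y) - proj F (k v - y)) + (y - proj F y) := by
      rw [map_sub]; abel
    calc ‖k v - proj F (k v)‖ ≤ ‖(k v - y) - proj F (k v - y)‖ + ‖y - proj F y‖ := by
          rw [hsplit]; exact norm_add_le _ _
      _ ≤ δ := by linarith
  refine ContinuousLinearMap.opNorm_le_bound _ hδ.le fun v => ?_
  rcases eq_or_ne v 0 with rfl | hv0
  · simp
  · have hnv : (0:ℝ) < ‖v‖ := norm_pos_iff.mpr hv0
    have hns : ‖((‖v‖:ℂ))⁻¹ • v‖ = 1 := by
      rw [norm_smul, norm_inv, Complex.norm_real, norm_norm, inv_mul_cancel₀ hnv.ne']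
    have := key (((‖v‖:ℂ))⁻¹ • v) hns.le
    rw [ContinuousLinearMap.sub_apply, ContinuousLinearMap.comp_apply]
    have heq : k (((‖v‖:ℂ))⁻¹ • v) - proj F (k (((‖v‖:ℂ))⁻¹ • v))
        = ((‖v‖:ℂ))⁻¹ • (k v - proj F (k v)) := by
      rw [map_smul, map_smul, ← smul_sub]
    rw [heq, norm_smul, norm_inv, Complex.norm_real, norm_norm] at this
    calc ‖k v - proj F (k v)‖ = ‖v‖ * (‖v‖⁻¹ * ‖k v - proj F (k v)‖) := by
          field_simp
      _ ≤ ‖v‖ * δ := by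
          exact mul_le_mul_of_nonneg_left this hnv.le
      _ = δ * ‖v‖ := mul_comm _ _

lemma single_eq_smul_e (x : Option ℤ) (a : ℂ) : lp.single 2 x a = a • e x := by
  rw [e, ← lp.single_smul]; norm_num

/-- the truncated-matrix finite rank operator -/
def trunc (k : H →L[ℂ] H) (F F' : Finset (Option ℤ)) : H →L[ℂ] H :=
  ∑ p ∈ F ×ˢ F', (inner ℂ (e p.1) (k (e p.2)) : ℂ) • rk p.1 p.2

lemma rk_comp_bound (k : H →L[ℂ] H) (x : Option ℤ) (F' : Finset (Option ℤ)) :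
    ‖rk x x ∘L k - rk x x ∘L k ∘L proj F'‖ ≤
      ‖ContinuousLinearMap.adjoint k (e x) - proj F' (ContinuousLinearMap.adjoint k (e x))‖ := by
  set w := ContinuousLinearMap.adjoint k (e x)
  refine ContinuousLinearMap.opNorm_le_bound _ (norm_nonneg _) fun v => ?_
  have h1 : (rk x x ∘L k - rk x x ∘L k ∘L proj F') v = ((k (v - proj F' v)) x) • e x := by
    simp only [ContinuousLinearMap.sub_apply, ContinuousLinearMap.comp_apply, rk_apply]
    rw [← sub_smul]
    congr 1
    rw [map_sub k, lp.coeFn_sub, Pi.sub_apply]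
  rw [h1, norm_smul, norm_e, mul_one]
  have h2 : ((k (v - proj F' v)) x : ℂ) = inner ℂ (w - proj F' w) v := by
    rw [← inner_e_apply, ← ContinuousLinearMap.adjoint_inner_left]
    show (inner ℂ w (v - proj F' v) : ℂ) = _
    rw [inner_sub_right, inner_sub_left, inner_proj_symm]
  rw [h2]
  exact norm_inner_le_norm _ _

lemma proj_comp_eq_trunc (k : H →L[ℂ] H) (F F' : Finset (Option ℤ)) :
    proj F ∘L k ∘L proj F' = trunc k F F' := by
  rw [trunc, Finset.sum_product, Finset.sum_comm]
  refine ContinuousLinearMap.ext fun v => ?_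
  simp only [ContinuousLinearMap.comp_apply]
  rw [proj_apply F' v, map_sum k, map_sum (proj F), ContinuousLinearMap.sum_apply]
  refine Finset.sum_congr rfl fun y _ => ?_
  rw [single_eq_smul_e y, map_smul, map_smul, proj_apply, Finset.smul_sum, ContinuousLinearMap.sum_apply]
  refine Finset.sum_congr rfl fun x _ => ?_
  rw [ContinuousLinearMap.smul_apply, rk_apply, inner_e_apply]
  rw [single_eq_smul_e x, smul_smul, smul_smul, mul_comm]

lemma exists_trunc_close (k : H →L[ℂ] H) (hk : IsCompactOperator ⇑k) {δ : ℝ} (hδ : 0 < δ) :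
    ∃ F F' : Finset (Option ℤ), ‖k - trunc k F F'‖ ≤ δ := by
  obtain ⟨F, hF⟩ := exists_proj_comp k hk (half_pos hδ)
  have hpos : (0:ℝ) < δ / (2 * (F.card + 1)) := by positivity
  choose! Fsel hFsel using fun y : H => exists_tail y hpos
  set F' : Finset (Option ℤ) := F.sup (fun x => Fsel (ContinuousLinearMap.adjoint k (e x)))
    with hF'
  refine ⟨F, F', ?_⟩
  have hsplit : k - trunc k F F' = (k - proj F ∘L k) + (proj F ∘L k - proj F ∘L k ∘L proj F') := by
    rw [proj_comp_eq_trunc]; abel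
  rw [hsplit]
  have h2 : ‖proj F ∘L k - proj F ∘L k ∘L proj F'‖ ≤ δ / 2 := by
    have heq : proj F ∘L k - proj F ∘L k ∘L proj F'
        = ∑ x ∈ F, (rk x x ∘L k - rk x x ∘L k ∘L proj F') := by
      rw [Finset.sum_sub_distrib, proj, ContinuousLinearMap.finset_sum_comp,
        ContinuousLinearMap.finset_sum_comp]
    rw [heq]
    calc ‖∑ x ∈ F, (rk x x ∘L k - rk x x ∘L k ∘L proj F')‖
        ≤ ∑ x ∈ F, ‖rk x x ∘L k - rk x x ∘L k ∘L proj F'‖ := norm_sum_le _ _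
      _ ≤ ∑ _x ∈ F, δ / (2 * (F.card + 1)) := by
          refine Finset.sum_le_sum fun x _ => ?_
          refine (rk_comp_bound k x F').trans ?_
          refine (hFsel (ContinuousLinearMap.adjoint k (e x)) F' ?_).le
          exact Finset.le_sup (f := fun x => Fsel (ContinuousLinearMap.adjoint k (e x))) ‹x ∈ F›
      _ ≤ δ / 2 := by
          rw [Finset.sum_const, nsmul_eq_mul]
          rw [mul_div_assoc']
          rw [div_le_div_iff₀ (by positivity) (by norm_num : (0:ℝ) < 2)]
          nlinarith [Nat.cast_nonneg (α := ℝ) F.card, hδ.le]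
  calc ‖(k - proj F ∘L k) + (proj F ∘L k - proj F ∘L k ∘L proj F')‖
      ≤ ‖k - proj F ∘L k‖ + ‖proj F ∘L k - proj F ∘L k ∘L proj F'‖ := norm_add_le _ _
    _ ≤ δ := by linarith

lemma U_apply_e {g : Equiv.Perm ℤ} {V : H →L[ℂ] H} (hV : ImplementsPerm g V) (x : Option ℤ) :
    V (e x) = e (Option.map g x) := by
  cases x with
  | none => exact hV.2.2.2
  | some i => exact hV.2.2.1 i

lemma conj_rk {g : Equiv.Perm ℤ} {V : H →L[ℂ] H} (hV : ImplementsPerm g V) (x y : Option ℤ) :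
    V * rk x y * ContinuousLinearMap.adjoint V = rk (Option.map g x) (Option.map g y) := by
  refine ContinuousLinearMap.ext fun v => ?_
  show V (rk x y (ContinuousLinearMap.adjoint V v)) = _
  rw [rk_apply, map_smul, U_apply_e hV, rk_apply]
  congr 1
  rw [← inner_e_apply, ContinuousLinearMap.adjoint_inner_right, U_apply_e hV, inner_e_apply]

lemma norm_V_apply {g : Equiv.Perm ℤ} {V : H →L[ℂ] H} (hV : ImplementsPerm g V) (v : H) :
    ‖V v‖ = ‖v‖ := by
  have h : (inner ℂ (V v) (V v) : ℂ) = inner ℂ v v := by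
    rw [← ContinuousLinearMap.adjoint_inner_left]
    have : ContinuousLinearMap.adjoint V (V v) = v := by
      have := congrArg (fun T : H →L[ℂ] H => T v) hV.2.1
      simpa [ContinuousLinearMap.mul_apply] using this
    rw [this]
  rw [norm_eq_sqrt_re_inner (𝕜 := ℂ), norm_eq_sqrt_re_inner (𝕜 := ℂ) v, h]

lemma norm_Vadj_apply {g : Equiv.Perm ℤ} {V : H →L[ℂ] H} (hV : ImplementsPerm g V) (v : H) :
    ‖ContinuousLinearMap.adjoint V v‖ = ‖v‖ := by
  have h : (inner ℂ (ContinuousLinearMap.adjoint V v) (ContinuousLinearMap.adjoint V v) : ℂ)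
      = inner ℂ v v := by
    rw [ContinuousLinearMap.adjoint_inner_left]
    have : V (ContinuousLinearMap.adjoint V v) = v := by
      have := congrArg (fun T : H →L[ℂ] H => T v) hV.1
      simpa [ContinuousLinearMap.mul_apply] using this
    rw [this]
  rw [norm_eq_sqrt_re_inner (𝕜 := ℂ), norm_eq_sqrt_re_inner (𝕜 := ℂ) v, h]

lemma norm_conj_le {g : Equiv.Perm ℤ} {V : H →L[ℂ] H} (hV : ImplementsPerm g V)
    (A : H →L[ℂ] H) : ‖V * A * ContinuousLinearMap.adjoint V‖ ≤ ‖A‖ := by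
  refine ContinuousLinearMap.opNorm_le_bound _ (norm_nonneg A) fun v => ?_
  show ‖V (A (ContinuousLinearMap.adjoint V v))‖ ≤ ‖A‖ * ‖v‖
  rw [norm_V_apply hV]
  calc ‖A (ContinuousLinearMap.adjoint V v)‖ ≤ ‖A‖ * ‖ContinuousLinearMap.adjoint V v‖ :=
        A.le_opNorm _
    _ = ‖A‖ * ‖v‖ := by rw [norm_Vadj_apply hV]

lemma adjoint_rk (x y : Option ℤ) : ContinuousLinearMap.adjoint (rk x y) = rk y x := by
  symm
  rw [ContinuousLinearMap.eq_adjoint_iff]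
  intro u w
  rw [rk_apply, rk_apply, inner_smul_left, inner_smul_right, inner_e_apply,
    ← inner_conj_symm u (e x), inner_e_apply]
  ring

lemma extendPerm_apply_mem (J : Finset ℤ) (g : Equiv.Perm {x : ℤ // x ∈ J}) {b : ℤ}
    (hb : b ∈ J) : extendPerm J g b = ↑(g ⟨b, hb⟩) := by
  rw [extendPerm, Equiv.Perm.extendDomain_apply_subtype _ _ hb]
  rfl

lemma sum_abs_le_sqrt_card (J : Finset ℤ) (v : H) :
    ∑ i ∈ J, ‖v (some i)‖ ≤ Real.sqrt J.card * ‖v‖ := by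
  have h1 : (∑ i ∈ J, ‖v (some i)‖) ^ 2 ≤ (J.card : ℝ) * ∑ i ∈ J, ‖v (some i)‖ ^ 2 :=
    sq_sum_le_card_mul_sum_sq
  have h2 : ∑ i ∈ J, ‖v (some i)‖ ^ 2 ≤ ‖v‖ ^ 2 := by
    have h3 := lp.sum_rpow_le_norm_rpow (p := (2:ℝ≥0∞))
      (by norm_num) v (J.image some)
    have htr : ((2:ℝ≥0∞)).toReal = (2:ℝ) := by norm_num
    rw [htr] at h3
    have h4 : ∑ x ∈ J.image some, ‖v x‖ ^ (2:ℝ) = ∑ i ∈ J, ‖v (some i)‖ ^ 2 := by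
      rw [Finset.sum_image (fun a _ b _ h => Option.some_injective _ h)]
      refine Finset.sum_congr rfl fun i _ => ?_
      rw [← Real.rpow_natCast (‖v (some i)‖) 2]
      norm_num
    rw [h4] at h3
    calc ∑ i ∈ J, ‖v (some i)‖ ^ 2 ≤ ‖v‖ ^ (2:ℝ) := h3
      _ = ‖v‖ ^ 2 := by rw [← Real.rpow_natCast ‖v‖ 2]; norm_num
  have hnn : (0:ℝ) ≤ ∑ i ∈ J, ‖v (some i)‖ :=
    Finset.sum_nonneg fun i _ => norm_nonneg _
  have h5 : (∑ i ∈ J, ‖v (some i)‖) ^ 2 ≤ (Real.sqrt J.card * ‖v‖) ^ 2 := by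
    rw [mul_pow, Real.sq_sqrt (Nat.cast_nonneg _)]
    calc (∑ i ∈ J, ‖v (some i)‖) ^ 2 ≤ (J.card : ℝ) * ∑ i ∈ J, ‖v (some i)‖ ^ 2 := h1
      _ ≤ (J.card : ℝ) * ‖v‖ ^ 2 := by
          exact mul_le_mul_of_nonneg_left h2 (Nat.cast_nonneg _)
  have h6 := Real.sqrt_le_sqrt h5
  rwa [Real.sqrt_sq hnn, Real.sqrt_sq (by positivity)] at h6

lemma core_bound (J : Finset ℤ) {b : ℤ} (hb : b ∈ J)
    (X : Equiv.Perm {x : ℤ // x ∈ J} → Option ℤ) :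
    ‖(J.card.factorial : ℂ)⁻¹ • ∑ g : Equiv.Perm {x : ℤ // x ∈ J},
        rk (X g) (some (extendPerm J g b))‖ ≤ (Real.sqrt J.card)⁻¹ := by
  have hn : 0 < J.card := Finset.card_pos.mpr ⟨b, hb⟩
  set n := J.card with hn'
  set c := ((Finset.univ.filter fun g : Equiv.Perm {x : ℤ // x ∈ J} =>
    g ⟨b, hb⟩ = ⟨b, hb⟩).card) with hc'
  have hcnNat : c * n = n.factorial := by
    have := card_fiber_mul (⟨b, hb⟩ : {x : ℤ // x ∈ J})
    rwa [Fintype.card_coe, Fintype.card_perm, Fintype.card_coe] at this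
  have hcn : (c : ℝ) * n = n.factorial := by exact_mod_cast hcnNat
  have hcpos : 0 < (c:ℝ) := by
    have : c ≠ 0 := by
      intro h0
      rw [h0, zero_mul] at hcnNat
      exact n.factorial_pos.ne' hcnNat.symm
    exact_mod_cast Nat.pos_of_ne_zero this
  refine ContinuousLinearMap.opNorm_le_bound _ (by positivity) fun v => ?_
  rw [ContinuousLinearMap.smul_apply, ContinuousLinearMap.sum_apply, norm_smul]
  have hterm : ∀ g : Equiv.Perm {x : ℤ // x ∈ J},
      ‖rk (X g) (some (extendPerm J g b)) v‖ = ‖v (some ↑(g ⟨b, hb⟩))‖ := by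
    intro g
    rw [rk_apply, norm_smul, norm_e, mul_one, extendPerm_apply_mem J g hb]
  have hsum : ∑ g : Equiv.Perm {x : ℤ // x ∈ J}, ‖rk (X g) (some (extendPerm J g b)) v‖
      = (c:ℝ) * ∑ i ∈ J, ‖v (some i)‖ := by
    rw [Finset.sum_congr rfl fun g _ => hterm g]
    have := sum_perm_comp_apply (⟨b, hb⟩ : {x : ℤ // x ∈ J})
      (fun j : {x : ℤ // x ∈ J} => ‖v (some ↑j)‖)
    rw [this, nsmul_eq_mul, ← hc']
    congr 1
    exact Finset.sum_coe_sort J (fun i => ‖v (some i)‖)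
  calc ‖(n.factorial : ℂ)⁻¹‖ * ‖∑ g : Equiv.Perm {x : ℤ // x ∈ J},
        rk (X g) (some (extendPerm J g b)) v‖
      ≤ ‖(n.factorial : ℂ)⁻¹‖ * ∑ g : Equiv.Perm {x : ℤ // x ∈ J},
        ‖rk (X g) (some (extendPerm J g b)) v‖ := by
        exact mul_le_mul_of_nonneg_left (norm_sum_le _ _) (norm_nonneg _)
    _ = (n.factorial : ℝ)⁻¹ * ((c:ℝ) * ∑ i ∈ J, ‖v (some i)‖) := by
        rw [hsum, norm_inv, Complex.norm_natCast]
    _ ≤ (n.factorial : ℝ)⁻¹ * ((c:ℝ) * (Real.sqrt n * ‖v‖)) := by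
        refine mul_le_mul_of_nonneg_left (mul_le_mul_of_nonneg_left ?_ hcpos.le) (by positivity)
        exact sum_abs_le_sqrt_card J v
    _ = (Real.sqrt n)⁻¹ * ‖v‖ := by
        have hs : Real.sqrt n * Real.sqrt n = (n:ℝ) := Real.mul_self_sqrt (Nat.cast_nonneg _)
        have hspos : 0 < Real.sqrt n := Real.sqrt_pos.mpr (by exact_mod_cast hn)
        rw [← hcn, ← hs]
        field_simp
        rw [Real.sqrt_sq hspos.le, Real.sq_sqrt (Nat.cast_nonneg _)]

lemma vacuum_eq : vacuumProjection = rk none none := rfl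

lemma e_none_none : ((e none : H) none : ℂ) = 1 := lp.single_apply_self 2 none 1

lemma e_none_some (b : ℤ) : ((e none : H) (some b) : ℂ) = 0 :=
  lp.single_apply_ne 2 none 1 (by simp)

lemma e_some_none (a : ℤ) : ((e (some a) : H) none : ℂ) = 0 :=
  lp.single_apply_ne 2 (some a) 1 (by simp)

lemma keyPair (U : Equiv.Perm ℤ → H →L[ℂ] H) (hU : ∀ g, ImplementsPerm g (U g))
    (J : Finset ℤ) (x y : Option ℤ)
    (hx : ∀ a : ℤ, x = some a → a ∈ J) (hy : ∀ b : ℤ, y = some b → b ∈ J) :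
    ‖(J.card.factorial : ℂ)⁻¹ • (∑ g : Equiv.Perm {z : ℤ // z ∈ J},
        U (extendPerm J g) * rk x y * ContinuousLinearMap.adjoint (U (extendPerm J g)))
      - (inner ℂ (e none) (rk x y (e none)) : ℂ) • vacuumProjection‖ ≤ (Real.sqrt J.card)⁻¹ := by
  have hconj : ∀ g : Equiv.Perm {z : ℤ // z ∈ J},
      U (extendPerm J g) * rk x y * ContinuousLinearMap.adjoint (U (extendPerm J g))
        = rk (Option.map (extendPerm J g) x) (Option.map (extendPerm J g) y) :=
    fun g => conj_rk (hU _) x y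
  rw [Finset.sum_congr rfl fun g _ => hconj g]
  match x, y with
  | none, none =>
    have hco : (inner ℂ (e none) (rk none none (e none)) : ℂ) = 1 := by
      rw [rk_apply, e_none_none, one_smul, inner_e_apply, e_none_none]
    rw [hco, one_smul]
    simp only [Option.map_none]
    rw [Finset.sum_const, Finset.card_univ, Fintype.card_perm, Fintype.card_coe]
    rw [← Nat.cast_smul_eq_nsmul ℂ, smul_smul,
      inv_mul_cancel₀ (Nat.cast_ne_zero.mpr J.card.factorial_ne_zero), one_smul,
      vacuum_eq, sub_self, norm_zero]
    positivity
  | x, some b =>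
    have hb : b ∈ J := hy b rfl
    have hco : (inner ℂ (e none) (rk x (some b) (e none)) : ℂ) = 0 := by
      rw [rk_apply, e_none_some, zero_smul, inner_zero_right]
    rw [hco, zero_smul, sub_zero]
    simp only [Option.map_some]
    exact core_bound J hb (fun g => Option.map (extendPerm J g) x)
  | some a, none =>
    have ha : a ∈ J := hx a rfl
    have hco : (inner ℂ (e none) (rk (some a) none (e none)) : ℂ) = 0 := by
      rw [rk_apply, e_none_none, one_smul, inner_e_apply, e_some_none]
    rw [hco, zero_smul, sub_zero]
    simp only [Option.map_some, Option.map_none]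
    rw [← (ContinuousLinearMap.adjoint (𝕜 := ℂ) (E := H) (F := H)).norm_map]
    rw [map_smulₛₗ, map_sum]
    have hadj : ∀ g : Equiv.Perm {z : ℤ // z ∈ J},
        ContinuousLinearMap.adjoint (rk (some (extendPerm J g a)) none)
          = rk none (some (extendPerm J g a)) := fun g => adjoint_rk _ _
    rw [Finset.sum_congr rfl fun g _ => hadj g]
    have hcc : (starRingEnd ℂ) ((J.card.factorial : ℂ)⁻¹) = (J.card.factorial : ℂ)⁻¹ := by
      simp [map_inv₀]
    rw [hcc]
    exact core_bound J ha (fun _ => none)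


set_option maxHeartbeats 1000000 in
/-- the permutation ergodic averages on the Boolean algebra converge in
norm to the conditional expectation `E(k + c·1) = ⟨k e_#, e_#⟩ P_# + c·1`. -/
theorem boolean_permutation_averages
    (U : Equiv.Perm ℤ → BooleanSpace →L[ℂ] BooleanSpace)
    (hU : ∀ g : Equiv.Perm ℤ, ImplementsPerm g (U g))
    (k : BooleanSpace →L[ℂ] BooleanSpace) (hk : IsCompactOperator ⇑k) (c : ℂ)
    (ε : ℝ) (hε : 0 < ε) :
    ∃ J₀ : Finset ℤ, ∀ J : Finset ℤ, J₀ ⊆ J →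
      ‖((J.card.factorial : ℂ))⁻¹ •
          (∑ g : Equiv.Perm {x : ℤ // x ∈ J},
            U (extendPerm J g) * (k + c • 1) *
              ContinuousLinearMap.adjoint (U (extendPerm J g)))
        - ((inner ℂ (e none) (k (e none)) : ℂ) • vacuumProjection + c • 1)‖ < ε := by
  obtain ⟨F, F', hFF⟩ := exists_trunc_close k hk (show (0:ℝ) < ε/4 by linarith)
  set t : H →L[ℂ] H := trunc k F F' with ht
  set D : H →L[ℂ] H := k - t with hD
  have hk' : k = D + t := by rw [hD]; abel
  have hDnorm : ‖D‖ ≤ ε/4 := hFF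
  set C : ℝ := ∑ p ∈ F ×ˢ F', ‖(inner ℂ (e p.1) (k (e p.2)) : ℂ)‖ with hC
  have hC0 : (0:ℝ) ≤ C := Finset.sum_nonneg fun p _ => norm_nonneg _
  set m : ℕ := ⌈(3*C/ε)^2⌉₊ + 1 with hm
  set ints : Finset ℤ := (F ∪ F').filterMap (fun o => o) (by
    intro a a' b hb hb'
    simp only [Option.mem_def] at hb hb'
    rw [hb, hb']) with hints'
  refine ⟨ints ∪ (Finset.range m).image (fun i : ℕ => (i:ℤ)), fun J hJ => ?_⟩
  -- cardinality facts
  have hmJ : m ≤ J.card := by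
    have h1 : (Finset.range m).image (fun i : ℕ => (i:ℤ)) ⊆ J :=
      (Finset.subset_union_right).trans hJ
    calc m = (Finset.range m).card := (Finset.card_range m).symm
      _ = ((Finset.range m).image (fun i : ℕ => (i:ℤ))).card :=
          (Finset.card_image_of_injective _ (fun a b h => by exact_mod_cast h)).symm
      _ ≤ J.card := Finset.card_le_card h1
  have hcard_pos : 0 < J.card := lt_of_lt_of_le (Nat.succ_pos _) hmJ
  have hsq_pos : 0 < Real.sqrt J.card := Real.sqrt_pos.mpr (by exact_mod_cast hcard_pos)
  have hmem : ∀ z ∈ F ∪ F', ∀ a : ℤ, z = some a → a ∈ J := by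
    intro z hz a hza
    refine hJ (Finset.mem_union_left _ ?_)
    rw [hints', Finset.mem_filterMap]
    exact ⟨z, hz, hza⟩
  -- the tail bound
  have htail : C * (Real.sqrt J.card)⁻¹ < ε/3 := by
    have h1 : ((3*C/ε)^2 : ℝ) < m := by
      have h0 := Nat.le_ceil ((3*C/ε)^2)
      have h0' : (⌈(3*C/ε)^2⌉₊ : ℕ) < m := by rw [hm]; exact Nat.lt_succ_self _
      calc ((3*C/ε)^2 : ℝ) ≤ (⌈(3*C/ε)^2⌉₊ : ℝ) := h0
        _ < m := by exact_mod_cast h0'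
    have h2 : (3*C/ε : ℝ) < Real.sqrt J.card := by
      have hle : ((3*C/ε)^2 : ℝ) < J.card := lt_of_lt_of_le h1 (by exact_mod_cast hmJ)
      have := Real.sqrt_lt_sqrt (by positivity) hle
      rwa [Real.sqrt_sq (by positivity)] at this
    rw [mul_inv_lt_iff₀ hsq_pos] -- C < ε/3 * sqrt
    calc C = (3*C/ε) * (ε/3) := by field_simp
      _ < Real.sqrt J.card * (ε/3) := by
          exact mul_lt_mul_of_pos_right h2 (by linarith)
      _ = ε/3 * Real.sqrt J.card := mul_comm _ _
  -- notation
  set N : ℕ := J.card.factorial with hN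
  have hNpos : (0:ℝ) < N := by exact_mod_cast J.card.factorial_pos
  have hcardPerm : (Finset.univ : Finset (Equiv.Perm {x : ℤ // x ∈ J})).card = N := by
    rw [Finset.card_univ, Fintype.card_perm, Fintype.card_coe]
  have hsum_split : (∑ g : Equiv.Perm {x : ℤ // x ∈ J},
        U (extendPerm J g) * (k + c • 1) * ContinuousLinearMap.adjoint (U (extendPerm J g)))
      = (∑ g : Equiv.Perm {x : ℤ // x ∈ J},
          U (extendPerm J g) * D * ContinuousLinearMap.adjoint (U (extendPerm J g)))
        + (∑ g : Equiv.Perm {x : ℤ // x ∈ J},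
          U (extendPerm J g) * t * ContinuousLinearMap.adjoint (U (extendPerm J g)))
        + (∑ g : Equiv.Perm {x : ℤ // x ∈ J},
          U (extendPerm J g) * (c • 1) * ContinuousLinearMap.adjoint (U (extendPerm J g))) := by
    rw [← Finset.sum_add_distrib, ← Finset.sum_add_distrib]
    refine Finset.sum_congr rfl fun g _ => ?_
    conv_lhs => rw [hk']
    rw [mul_add, mul_add, add_mul, add_mul]
  have hS_c1 : (N:ℂ)⁻¹ • (∑ g : Equiv.Perm {x : ℤ // x ∈ J},
      U (extendPerm J g) * (c • 1) * ContinuousLinearMap.adjoint (U (extendPerm J g)))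
        = c • 1 := by
    have hterm : ∀ g : Equiv.Perm {x : ℤ // x ∈ J},
        U (extendPerm J g) * (c • 1) * ContinuousLinearMap.adjoint (U (extendPerm J g))
          = c • 1 := by
      intro g
      rw [mul_smul_comm, mul_one, smul_mul_assoc, (hU (extendPerm J g)).1]
    rw [Finset.sum_congr rfl fun g _ => hterm g, Finset.sum_const, hcardPerm,
      ← Nat.cast_smul_eq_nsmul ℂ, smul_smul,
      inv_mul_cancel₀ (by exact_mod_cast hNpos.ne'), one_smul]
  have hinner : (inner ℂ (e none) (k (e none)) : ℂ)
      = inner ℂ (e none) (D (e none)) + inner ℂ (e none) (t (e none)) := by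
    conv_lhs => rw [hk']
    rw [ContinuousLinearMap.add_apply, inner_add_right]
  -- bound on the D part
  have hX1 : ‖(N:ℂ)⁻¹ • (∑ g : Equiv.Perm {x : ℤ // x ∈ J},
      U (extendPerm J g) * D * ContinuousLinearMap.adjoint (U (extendPerm J g)))‖ ≤ ‖D‖ := by
    refine le_trans (ContinuousLinearMap.opNorm_smul_le _ _) ?_
    calc ‖(N:ℂ)⁻¹‖ * ‖∑ g : Equiv.Perm {x : ℤ // x ∈ J},
          U (extendPerm J g) * D * ContinuousLinearMap.adjoint (U (extendPerm J g))‖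
        ≤ ‖(N:ℂ)⁻¹‖ * (N * ‖D‖) := by
          refine mul_le_mul_of_nonneg_left ?_ (norm_nonneg _)
          calc ‖∑ g : Equiv.Perm {x : ℤ // x ∈ J},
                U (extendPerm J g) * D * ContinuousLinearMap.adjoint (U (extendPerm J g))‖
              ≤ ∑ g : Equiv.Perm {x : ℤ // x ∈ J},
                ‖U (extendPerm J g) * D * ContinuousLinearMap.adjoint (U (extendPerm J g))‖ :=
              norm_sum_le _ _
            _ ≤ ∑ _g : Equiv.Perm {x : ℤ // x ∈ J}, ‖D‖ :=
                Finset.sum_le_sum fun g _ => norm_conj_le (hU _) D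
            _ = N * ‖D‖ := by rw [Finset.sum_const, hcardPerm, nsmul_eq_mul]
      _ = ‖D‖ := by
          rw [norm_inv, Complex.norm_natCast, ← mul_assoc,
            inv_mul_cancel₀ hNpos.ne', one_mul]
  have hY : ∀ A : H →L[ℂ] H,
      ‖(inner ℂ (e none) (A (e none)) : ℂ) • vacuumProjection‖ ≤ ‖A‖ := by
    intro A
    refine le_trans (ContinuousLinearMap.opNorm_smul_le _ _) ?_
    calc ‖(inner ℂ (e none) (A (e none)) : ℂ)‖ * ‖vacuumProjection‖
        ≤ (‖e none‖ * ‖A (e none)‖) * 1 := by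
          refine mul_le_mul (norm_inner_le_norm _ _) (vacuum_eq ▸ norm_rk_le none none)
            (norm_nonneg _) (by positivity)
      _ ≤ ‖A‖ := by
          rw [norm_e, one_mul, mul_one]
          calc ‖A (e none)‖ ≤ ‖A‖ * ‖e none‖ := A.le_opNorm _
            _ = ‖A‖ := by rw [norm_e, mul_one]
  -- the t part rewritten as a combination of rank one pieces
  have hX2 : (N:ℂ)⁻¹ • (∑ g : Equiv.Perm {x : ℤ // x ∈ J},
        U (extendPerm J g) * t * ContinuousLinearMap.adjoint (U (extendPerm J g)))
      - (inner ℂ (e none) (t (e none)) : ℂ) • vacuumProjection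
      = ∑ p ∈ F ×ˢ F', (inner ℂ (e p.1) (k (e p.2)) : ℂ) •
          ((N:ℂ)⁻¹ • (∑ g : Equiv.Perm {x : ℤ // x ∈ J},
            U (extendPerm J g) * rk p.1 p.2 * ContinuousLinearMap.adjoint (U (extendPerm J g)))
          - (inner ℂ (e none) (rk p.1 p.2 (e none)) : ℂ) • vacuumProjection) := by
    have hSt : (∑ g : Equiv.Perm {x : ℤ // x ∈ J},
        U (extendPerm J g) * t * ContinuousLinearMap.adjoint (U (extendPerm J g)))
        = ∑ p ∈ F ×ˢ F', (inner ℂ (e p.1) (k (e p.2)) : ℂ) •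
          (∑ g : Equiv.Perm {x : ℤ // x ∈ J},
            U (extendPerm J g) * rk p.1 p.2 * ContinuousLinearMap.adjoint (U (extendPerm J g))) := by
      have hterm : ∀ g : Equiv.Perm {x : ℤ // x ∈ J},
          U (extendPerm J g) * t * ContinuousLinearMap.adjoint (U (extendPerm J g))
            = ∑ p ∈ F ×ˢ F', (inner ℂ (e p.1) (k (e p.2)) : ℂ) •
              (U (extendPerm J g) * rk p.1 p.2 * ContinuousLinearMap.adjoint (U (extendPerm J g))) := by
        intro g
        rw [ht, trunc, Finset.mul_sum, Finset.sum_mul]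
        refine Finset.sum_congr rfl fun p _ => ?_
        rw [mul_smul_comm, smul_mul_assoc]
      rw [Finset.sum_congr rfl fun g _ => hterm g, Finset.sum_comm]
      exact Finset.sum_congr rfl fun p _ => (Finset.smul_sum).symm
    have hTe : (inner ℂ (e none) (t (e none)) : ℂ) • vacuumProjection
        = ∑ p ∈ F ×ˢ F', (inner ℂ (e p.1) (k (e p.2)) : ℂ) •
            ((inner ℂ (e none) (rk p.1 p.2 (e none)) : ℂ) • vacuumProjection) := by
      have h1 : (inner ℂ (e none) (t (e none)) : ℂ)
          = ∑ p ∈ F ×ˢ F', (inner ℂ (e p.1) (k (e p.2)) : ℂ) *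
              (inner ℂ (e none) (rk p.1 p.2 (e none)) : ℂ) := by
        rw [ht, trunc, ContinuousLinearMap.sum_apply, inner_sum]
        refine Finset.sum_congr rfl fun p _ => ?_
        rw [ContinuousLinearMap.smul_apply, inner_smul_right]
      rw [h1, Finset.sum_smul]
      exact Finset.sum_congr rfl fun p _ => (smul_smul _ _ _).symm
    rw [hSt, hTe, Finset.smul_sum, ← Finset.sum_sub_distrib]
    refine Finset.sum_congr rfl fun p _ => ?_
    rw [smul_comm ((N:ℂ)⁻¹), ← smul_sub]
  -- assemble
  have hfinal : ((N : ℂ))⁻¹ •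
          (∑ g : Equiv.Perm {x : ℤ // x ∈ J},
            U (extendPerm J g) * (k + c • 1) *
              ContinuousLinearMap.adjoint (U (extendPerm J g)))
        - ((inner ℂ (e none) (k (e none)) : ℂ) • vacuumProjection + c • 1)
      = ((N:ℂ)⁻¹ • (∑ g : Equiv.Perm {x : ℤ // x ∈ J},
          U (extendPerm J g) * D * ContinuousLinearMap.adjoint (U (extendPerm J g)))
        - (inner ℂ (e none) (D (e none)) : ℂ) • vacuumProjection)
      + ((N:ℂ)⁻¹ • (∑ g : Equiv.Perm {x : ℤ // x ∈ J},
          U (extendPerm J g) * t * ContinuousLinearMap.adjoint (U (extendPerm J g)))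
        - (inner ℂ (e none) (t (e none)) : ℂ) • vacuumProjection) := by
    rw [hsum_split, smul_add, smul_add, hS_c1, hinner, add_smul]
    abel
  rw [hfinal]
  have hbound2 : ‖(N:ℂ)⁻¹ • (∑ g : Equiv.Perm {x : ℤ // x ∈ J},
        U (extendPerm J g) * t * ContinuousLinearMap.adjoint (U (extendPerm J g)))
      - (inner ℂ (e none) (t (e none)) : ℂ) • vacuumProjection‖ ≤ C * (Real.sqrt J.card)⁻¹ := by
    rw [hX2]
    calc ‖∑ p ∈ F ×ˢ F', (inner ℂ (e p.1) (k (e p.2)) : ℂ) •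
          ((N:ℂ)⁻¹ • (∑ g : Equiv.Perm {x : ℤ // x ∈ J},
            U (extendPerm J g) * rk p.1 p.2 * ContinuousLinearMap.adjoint (U (extendPerm J g)))
          - (inner ℂ (e none) (rk p.1 p.2 (e none)) : ℂ) • vacuumProjection)‖
        ≤ ∑ p ∈ F ×ˢ F', ‖(inner ℂ (e p.1) (k (e p.2)) : ℂ)‖ * (Real.sqrt J.card)⁻¹ := by
          refine (norm_sum_le _ _).trans (Finset.sum_le_sum fun p hp => ?_)
          refine le_trans (ContinuousLinearMap.opNorm_smul_le _ _) ?_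
          refine mul_le_mul_of_nonneg_left ?_ (norm_nonneg _)
          refine keyPair U hU J p.1 p.2 ?_ ?_
          · intro a ha
            refine hmem p.1 ?_ a ha
            exact Finset.mem_union_left _ (Finset.mem_product.mp hp).1
          · intro b hb
            refine hmem p.2 ?_ b hb
            exact Finset.mem_union_right _ (Finset.mem_product.mp hp).2
      _ = C * (Real.sqrt J.card)⁻¹ := by rw [hC, Finset.sum_mul]
  refine lt_of_le_of_lt ((norm_add_le _ _).trans (add_le_add
    ((norm_sub_le _ _).trans (add_le_add hX1 (hY D))) hbound2)) ?_
  linarith
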